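/- Let a₁, a₂, b₁ be positive real numbers with s := b₁ − a₁ − a₂ > 0. Then the sequence of partial sums ∑_{l=0}^{m-1} Γ(a₁+l)Γ(a₂+l)/(Γ(b₁+l)Γ(1+l)) converges as m → ∞ to Γ(a₁)Γ(a₂)Γ(s)/(Γ(a₁+s)Γ(a₂+s)). -/

import Mathlib

open Real Filter

noncomputable def gaussC (a : ℝ) (l : ℕ) : ℝ := Gamma (a + l) / (Gamma a * l.factorial)

lemma gaussC_zero {a : ℝ} (ha : 0 < a) : gaussC a 0 = 1 := by
  have h3 : Gamma a ≠ 0 := (Gamma_pos_of_pos ha).ne'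
  simp [gaussC, h3]

lemma gaussC_pos {a : ℝ} (ha : 0 < a) (l : ℕ) : 0 < gaussC a l := by
  have h1 : 0 < Gamma (a + l) := Gamma_pos_of_pos (by positivity)
  have h2 : 0 < Gamma a := Gamma_pos_of_pos ha
  have h3 : 0 < (l.factorial : ℝ) := by positivity
  exact div_pos h1 (by positivity)

lemma gaussC_succ {a : ℝ} (ha : 0 < a) (l : ℕ) :
    gaussC a (l + 1) * (l + 1) = gaussC a l * (a + l) := by
  have hne : a + (l:ℝ) ≠ 0 := by positivity
  have h1 : Gamma (a + ((l : ℕ) + 1 : ℕ)) = (a + l) * Gamma (a + l) := by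
    rw [show a + (((l : ℕ) + 1 : ℕ) : ℝ) = (a + l) + 1 by push_cast; ring, Gamma_add_one hne]
  have h2 : ((l + 1 : ℕ).factorial : ℝ) = (l + 1) * l.factorial := by
    rw [Nat.factorial_succ]; push_cast; ring
  have h3 : Gamma a ≠ 0 := (Gamma_pos_of_pos ha).ne'
  have h4 : (l.factorial : ℝ) ≠ 0 := by positivity
  rw [gaussC, gaussC, h1, h2]
  field_simp


lemma gaussC_succ' {a : ℝ} (ha : 0 < a) (l : ℕ) :
    gaussC a (l + 1) = gaussC a l * ((a + l) / (l + 1)) := by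
  have h1 : ((l : ℝ) + 1) ≠ 0 := by positivity
  rw [mul_div_assoc', eq_div_iff h1]
  exact gaussC_succ ha l

lemma summable_helper {a : ℝ} (ha : 0 < a) (w : ℕ → ℝ) (hw : ∀ l, 0 < w l)
    (hrat : ∀ l : ℕ, w (l + 1) = w l * ((a + l) / (l + 1))) {x : ℝ} (hx : |x| < 1) :
    Summable (fun l : ℕ => w l * x ^ l) := by
  set r : ℝ := (|x| + 1) / 2 with hr
  have hxr : |x| < r := by rw [hr]; linarith [abs_nonneg x]
  have hr1 : r < 1 := by rw [hr]; linarith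
  have hr0 : 0 ≤ r := by positivity
  have htend : Tendsto (fun l : ℕ => |x| * ((a + l) / (l + 1))) atTop (nhds |x|) := by
    have h1 : Tendsto (fun l : ℕ => (l : ℝ) + 1) atTop atTop :=
      tendsto_atTop_add_const_right atTop 1 tendsto_natCast_atTop_atTop
    have h2 : Tendsto (fun l : ℕ => (a - 1) / ((l : ℝ) + 1)) atTop (nhds 0) :=
      Tendsto.div_atTop tendsto_const_nhds h1
    have h3 : Tendsto (fun l : ℕ => (a + l) / ((l : ℝ) + 1)) atTop (nhds 1) := by
      have heq : (fun l : ℕ => (a + l) / ((l : ℝ) + 1))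
          = fun l : ℕ => (a - 1) / ((l : ℝ) + 1) + 1 := by
        funext l
        have : ((l : ℝ) + 1) ≠ 0 := by positivity
        field_simp
        ring
      rw [heq]
      simpa using h2.add tendsto_const_nhds
    simpa using tendsto_const_nhds.mul h3
  have hev : ∀ᶠ l : ℕ in atTop, |x| * ((a + l) / (l + 1)) ≤ r :=
    htend.eventually_le_const hxr
  refine summable_of_ratio_norm_eventually_le hr1 ?_
  filter_upwards [hev] with l hl
  have hwl := hw l
  have hal : (0:ℝ) ≤ (a + l) / (l + 1) := by positivity
  calc ‖w (l + 1) * x ^ (l + 1)‖ = w l * ((a + l) / (l + 1)) * (|x| ^ l * |x|) := by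
        rw [hrat l, norm_mul, norm_pow, Real.norm_eq_abs, Real.norm_eq_abs, abs_mul,
          abs_of_pos hwl, abs_of_nonneg hal, pow_succ]
    _ = (|x| * ((a + l) / (l + 1))) * (w l * |x| ^ l) := by ring
    _ ≤ r * (w l * |x| ^ l) := mul_le_mul_of_nonneg_right hl (by positivity)
    _ = r * ‖w l * x ^ l‖ := by
        rw [norm_mul, norm_pow, Real.norm_eq_abs, Real.norm_eq_abs, abs_of_pos hwl]

lemma summable_gaussC_pow {a : ℝ} (ha : 0 < a) {x : ℝ} (hx : |x| < 1) :
    Summable (fun l : ℕ => gaussC a l * x ^ l) :=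
  summable_helper ha _ (gaussC_pos ha) (gaussC_succ' ha) hx

lemma summable_gaussC_shifted {a : ℝ} (ha : 0 < a) {x : ℝ} (hx : |x| < 1) :
    Summable (fun l : ℕ => gaussC a l * (a + l) * x ^ l) := by
  refine summable_helper (a := a + 1) (by linarith) _
    (fun l => mul_pos (gaussC_pos ha l) (by positivity)) (fun l => ?_) hx
  rw [gaussC_succ' ha l]
  have h2 : ((l : ℝ) + 1) ≠ 0 := by positivity
  push_cast
  ring

lemma summable_gaussC_deriv {a : ℝ} (ha : 0 < a) {x : ℝ} (hx : |x| < 1) :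
    Summable (fun l : ℕ => gaussC a l * l * x ^ (l - 1)) := by
  rw [← summable_nat_add_iff 1]
  have heq : (fun l : ℕ => gaussC a (l + 1) * ((l + 1 : ℕ) : ℝ) * x ^ ((l + 1) - 1))
      = fun l : ℕ => gaussC a l * (a + l) * x ^ l := by
    funext l
    have h := gaussC_succ ha l
    push_cast
    rw [h]
  rw [heq]
  exact summable_gaussC_shifted ha hx

noncomputable def gaussG (a : ℝ) (x : ℝ) : ℝ := ∑' l : ℕ, gaussC a l * x ^ l

lemma gaussG_zero {a : ℝ} (ha : 0 < a) : gaussG a 0 = 1 := by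
  rw [gaussG, tsum_eq_single 0 (fun b hb => ?_)]
  · rw [gaussC_zero ha, pow_zero, mul_one]
  · obtain ⟨n, rfl⟩ := Nat.exists_eq_succ_of_ne_zero hb
    simp [pow_succ]

lemma hasDerivAt_gaussG {a : ℝ} (ha : 0 < a) {r : ℝ} (hr0 : 0 < r) (hr1 : r < 1)
    {x : ℝ} (hx : x ∈ Set.Ioo (-r) r) :
    HasDerivAt (gaussG a) (∑' l : ℕ, gaussC a l * l * x ^ (l - 1)) x := by
  have hrabs : |r| < 1 := by rw [abs_of_pos hr0]; exact hr1
  have main := hasDerivAt_tsum_of_isPreconnected (𝕜 := ℝ) (F := ℝ)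
    (u := fun l => gaussC a l * l * r ^ (l - 1))
    (g := fun (l : ℕ) (y : ℝ) => gaussC a l * y ^ l)
    (g' := fun (l : ℕ) (y : ℝ) => gaussC a l * l * y ^ (l - 1))
    (t := Set.Ioo (-r) r) (y₀ := 0) (y := x)
  refine main (summable_gaussC_deriv ha hrabs) isOpen_Ioo (convex_Ioo _ _).isPreconnected
    (fun l y _ => ?_) (fun l y hy => ?_) ⟨by linarith, hr0⟩ ?_ hx
  · have h := (hasDerivAt_pow l y).const_mul (gaussC a l)
    exact h.congr_deriv (by ring)
  · rw [norm_mul, norm_mul, norm_pow, Real.norm_eq_abs, Real.norm_eq_abs, Real.norm_eq_abs]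
    have h1 : 0 < gaussC a l := gaussC_pos ha l
    have h2 : |y| ≤ r := by
      rw [abs_le]; exact ⟨hy.1.le, hy.2.le⟩
    rw [abs_of_pos h1, abs_of_nonneg (Nat.cast_nonneg l)]
    gcongr
  · simpa using summable_gaussC_pow ha (x := (0:ℝ)) (by norm_num)

lemma gaussG_identity {a : ℝ} (ha : 0 < a) {x : ℝ} (hx : |x| < 1) :
    (1 - x) * (∑' l : ℕ, gaussC a l * l * x ^ (l - 1)) = a * gaussG a x := by
  set D := ∑' l : ℕ, gaussC a l * l * x ^ (l - 1) with hD
  have hS1 : Summable (fun l : ℕ => gaussC a l * x ^ l) := summable_gaussC_pow ha hx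
  have hSd : Summable (fun l : ℕ => gaussC a l * l * x ^ (l - 1)) := summable_gaussC_deriv ha hx
  have hSsh : Summable (fun l : ℕ => gaussC a l * (a + l) * x ^ l) := summable_gaussC_shifted ha hx
  have hSl : Summable (fun l : ℕ => gaussC a l * l * x ^ l) := by
    have := hSsh.sub (hS1.mul_left a)
    refine this.congr fun l => ?_
    ring
  have step1 : D = ∑' l : ℕ, gaussC a l * (a + l) * x ^ l := by
    rw [hD, Summable.tsum_eq_zero_add hSd]
    simp only [Nat.cast_zero, mul_zero, zero_mul, zero_add]
    congr 1
    funext l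
    have h := gaussC_succ ha l
    push_cast
    rw [h]
  have step2 : ∑' l : ℕ, gaussC a l * (a + l) * x ^ l
      = a * gaussG a x + ∑' l : ℕ, gaussC a l * l * x ^ l := by
    rw [gaussG, ← tsum_mul_left, ← Summable.tsum_add (hS1.mul_left a) hSl]
    congr 1
    funext l
    ring
  have step3 : ∑' l : ℕ, gaussC a l * l * x ^ l = x * D := by
    rw [hD, ← tsum_mul_left]
    congr 1
    funext l
    cases l with
    | zero => simp
    | succ n =>
      rw [Nat.add_sub_cancel]
      ring
  have key : D = a * gaussG a x + x * D := by
    conv_lhs => rw [step1, step2, step3]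
  linear_combination key

lemma binomial_hasSum {a : ℝ} (ha : 0 < a) {t : ℝ} (ht0 : 0 ≤ t) (ht1 : t < 1) :
    HasSum (fun l : ℕ => gaussC a l * t ^ l) ((1 - t) ^ (-a)) := by
  set r : ℝ := (1 + t) / 2 with hrdef
  have hrt : t < r := by rw [hrdef]; linarith
  have hr1 : r < 1 := by rw [hrdef]; linarith
  have hr0 : 0 < r := by rw [hrdef]; linarith
  have hder : ∀ x ∈ Set.Icc 0 t, HasDerivAt (fun y => gaussG a y * (1 - y) ^ a) 0 x := by
    intro x hx
    have hx0 : 0 ≤ x := hx.1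
    have hxt : x ≤ t := hx.2
    have hxr : x ∈ Set.Ioo (-r) r := ⟨by linarith, by linarith⟩
    have hxabs : |x| < 1 := by rw [abs_of_nonneg hx0]; linarith
    have h1x : (0:ℝ) < 1 - x := by linarith
    have hg := hasDerivAt_gaussG ha hr0 hr1 hxr
    have hrp : HasDerivAt (fun y : ℝ => (1 - y) ^ a) (-1 * a * (1 - x) ^ (a - 1)) x := by
      have hf : HasDerivAt (fun y : ℝ => 1 - y) (-1) x := (hasDerivAt_id x).const_sub 1
      exact hf.rpow_const (Or.inl h1x.ne')
    have := hg.mul hrp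
    refine this.congr_deriv ?_
    have hpow : (1 - x) ^ a = (1 - x) ^ (a - 1) * (1 - x) := by
      rw [← Real.rpow_add_one h1x.ne' (a - 1), sub_add_cancel]
    have hid := gaussG_identity ha hxabs
    rw [hpow]
    linear_combination ((1 - x) ^ (a - 1)) * hid
  have hconst := constant_of_has_deriv_right_zero
    (f := fun y => gaussG a y * (1 - y) ^ a) (a := 0) (b := t)
    (fun x hx => ((hder x hx).continuousAt).continuousWithinAt)
    (fun x hx => ((hder x ⟨hx.1, hx.2.le⟩).hasDerivWithinAt))
  have hval : gaussG a t * (1 - t) ^ a = 1 := by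
    have h0 := hconst t ⟨ht0, le_refl t⟩
    simp only [sub_zero, Real.one_rpow, mul_one, gaussG_zero ha] at h0
    exact h0
  have h1t : (0:ℝ) < 1 - t := by linarith
  have hpow_pos : (0:ℝ) < (1 - t) ^ a := Real.rpow_pos_of_pos h1t a
  have hgt : gaussG a t = (1 - t) ^ (-a) := by
    rw [Real.rpow_neg h1t.le]
    field_simp
    linarith [hval]
  have habs : |t| < 1 := by rw [abs_of_nonneg ht0]; exact ht1
  have hh := (summable_gaussC_pow ha habs).hasSum
  rw [gaussG] at hgt
  rwa [hgt] at hh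

lemma realBeta_eqOn {u v : ℝ} :
    Set.EqOn (fun t : ℝ => ((t ^ (u - 1) * (1 - t) ^ (v - 1) : ℝ) : ℂ))
      (fun t : ℝ => (t : ℂ) ^ ((u : ℂ) - 1) * ((1 : ℂ) - t) ^ ((v : ℂ) - 1))
      (Set.uIcc (0:ℝ) 1) := by
  intro t ht
  rw [Set.uIcc_of_le zero_le_one] at ht
  have ht0 : 0 ≤ t := ht.1
  have ht1 : 0 ≤ 1 - t := by linarith [ht.2]
  simp only [Complex.ofReal_mul]
  rw [Complex.ofReal_cpow ht0, Complex.ofReal_cpow ht1]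
  push_cast
  ring

lemma realBeta_intervalIntegrable {u v : ℝ} (hu : 0 < u) (hv : 0 < v) :
    IntervalIntegrable (fun t : ℝ => t ^ (u - 1) * (1 - t) ^ (v - 1)) MeasureTheory.volume 0 1 := by
  have hc := Complex.betaIntegral_convergent (u := (u:ℂ)) (v := (v:ℂ)) (by simpa using hu)
    (by simpa using hv)
  rw [intervalIntegrable_iff_integrableOn_Ioc_of_le zero_le_one]
  have hre : MeasureTheory.IntegrableOn
      (fun x : ℝ => ((x : ℂ) ^ ((u:ℂ) - 1) * ((1:ℂ) - x) ^ ((v:ℂ) - 1)).re)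
      (Set.Ioc 0 1) MeasureTheory.volume := hc.1.re
  apply hre.congr_fun ?_ measurableSet_Ioc
  intro t ht
  have ht' : t ∈ Set.uIcc (0:ℝ) 1 := by
    rw [Set.uIcc_of_le zero_le_one]
    exact ⟨ht.1.le, ht.2⟩
  have heq := realBeta_eqOn (u := u) (v := v) ht'
  simp only at heq
  simp only [← heq, Complex.ofReal_re]

lemma realBeta_value {u v : ℝ} (hu : 0 < u) (hv : 0 < v) :
    ∫ t in (0:ℝ)..1, t ^ (u - 1) * (1 - t) ^ (v - 1) = Gamma u * Gamma v / Gamma (u + v) := by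
  have h := Complex.Gamma_mul_Gamma_eq_betaIntegral (s := (u:ℂ)) (t := (v:ℂ))
    (by simpa using hu) (by simpa using hv)
  have hofreal : ((∫ t in (0:ℝ)..1, t ^ (u - 1) * (1 - t) ^ (v - 1) : ℝ) : ℂ)
      = Complex.betaIntegral u v := by
    rw [Complex.betaIntegral, ← intervalIntegral.integral_ofReal]
    exact intervalIntegral.integral_congr realBeta_eqOn
  rw [← hofreal, ← Complex.ofReal_add, Complex.Gamma_ofReal, Complex.Gamma_ofReal,
    Complex.Gamma_ofReal] at h
  have h' : Gamma u * Gamma v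
      = Gamma (u + v) * ∫ t in (0:ℝ)..1, t ^ (u - 1) * (1 - t) ^ (v - 1) := by
    exact_mod_cast h
  have hG : Gamma (u + v) ≠ 0 := (Gamma_pos_of_pos (by linarith)).ne'
  field_simp
  linarith [h']

open MeasureTheory in
lemma gauss_hasSum (a₁ a₂ b₁ s : ℝ)
    (ha₁ : 0 < a₁) (ha₂ : 0 < a₂) (hb₁ : 0 < b₁)
    (hs : s = b₁ - a₁ - a₂) (hspos : 0 < s) :
    HasSum (fun l : ℕ => Gamma (a₁ + l) * Gamma (a₂ + l) / (Gamma (b₁ + l) * Gamma (1 + l)))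
      (Gamma a₁ * Gamma a₂ * Gamma s / (Gamma (a₁ + s) * Gamma (a₂ + s))) := by
  set s' : ℝ := a₁ + s with hs'def
  have hs' : 0 < s' := by positivity
  have hb₁eq : b₁ = a₂ + s' := by rw [hs'def]; linarith
  set G : ℕ → ℝ → ℝ :=
    fun l t => gaussC a₁ l * (t ^ (a₂ + l - 1) * (1 - t) ^ (s' - 1)) with hGdef
  set A : ℕ → ℝ := fun l => ∫ t in Set.Ioo (0:ℝ) 1, G l t with hAdef
  -- integrability of each G l on Ioo 0 1
  have hbaseInt : ∀ l : ℕ, IntegrableOn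
      (fun t : ℝ => t ^ (a₂ + l - 1) * (1 - t) ^ (s' - 1)) (Set.Ioo 0 1) volume := by
    intro l
    have h := (realBeta_intervalIntegrable (u := a₂ + l) (v := s') (by positivity) hs').1
    exact h.mono_set Set.Ioo_subset_Ioc_self
  have hGint : ∀ l : ℕ, IntegrableOn (G l) (Set.Ioo 0 1) volume :=
    fun l => (hbaseInt l).const_mul _
  have hGnonneg : ∀ l : ℕ, ∀ t ∈ Set.Ioo (0:ℝ) 1, 0 ≤ G l t := by
    intro l t ht
    have h1 : (0:ℝ) ≤ t := ht.1.le
    have h2 : (0:ℝ) ≤ 1 - t := by linarith [ht.2]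
    have := (gaussC_pos ha₁ l).le
    positivity
  -- value of A l
  have hA : ∀ l : ℕ, A l = gaussC a₁ l * (Gamma (a₂ + l) * Gamma s' / Gamma (b₁ + l)) := by
    intro l
    rw [hAdef]
    simp only [hGdef]
    rw [MeasureTheory.integral_const_mul]
    congr 1
    rw [← MeasureTheory.integral_Ioc_eq_integral_Ioo,
      ← intervalIntegral.integral_of_le zero_le_one,
      realBeta_value (u := a₂ + l) (v := s') (by positivity) hs']
    congr 2
    rw [hb₁eq]
    ring
  -- each term of the series equals K * A l
  have hGammaA₁ : Gamma a₁ ≠ 0 := (Gamma_pos_of_pos ha₁).ne'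
  have hGammaS' : Gamma s' ≠ 0 := (Gamma_pos_of_pos hs').ne'
  have hterm : ∀ l : ℕ, Gamma (a₁ + l) * Gamma (a₂ + l) / (Gamma (b₁ + l) * Gamma (1 + l))
      = (Gamma a₁ / Gamma s') * A l := by
    intro l
    rw [hA l, gaussC]
    have hfact : Gamma (1 + (l:ℝ)) = l.factorial := by
      rw [add_comm]; exact_mod_cast Real.Gamma_nat_eq_factorial l
    have hGb : Gamma (b₁ + l) ≠ 0 := (Gamma_pos_of_pos (by positivity)).ne'
    have hfl : (l.factorial : ℝ) ≠ 0 := by positivity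
    rw [hfact]
    field_simp
  -- pointwise sum
  have hsumIoo : ∀ t ∈ Set.Ioo (0:ℝ) 1,
      HasSum (fun l => G l t) (t ^ (a₂ - 1) * (1 - t) ^ (s - 1)) := by
    intro t ht
    have h0t : 0 < t := ht.1
    have h1t : (0:ℝ) < 1 - t := by linarith [ht.2]
    have hb := binomial_hasSum ha₁ h0t.le ht.2
    have hmul := hb.mul_right (t ^ (a₂ - 1) * (1 - t) ^ (s' - 1))
    have heq : (fun l : ℕ => gaussC a₁ l * t ^ l * (t ^ (a₂ - 1) * (1 - t) ^ (s' - 1)))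
        = fun l => G l t := by
      funext l
      rw [hGdef]
      simp only
      have hpow : t ^ (a₂ + (l:ℝ) - 1) = t ^ (l:ℝ) * t ^ (a₂ - 1) := by
        rw [← Real.rpow_add h0t]
        ring_nf
      rw [← Real.rpow_natCast t l, hpow]
      ring
    have hval : (1 - t) ^ (-a₁) * (t ^ (a₂ - 1) * (1 - t) ^ (s' - 1))
        = t ^ (a₂ - 1) * (1 - t) ^ (s - 1) := by
      rw [show s - 1 = -a₁ + (s' - 1) by rw [hs'def]; ring, Real.rpow_add h1t]
      ring
    rw [heq, hval] at hmul
    exact hmul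
  -- measurability
  have hGaemeas : ∀ l : ℕ, AEMeasurable (fun t => ENNReal.ofReal (G l t))
      (volume.restrict (Set.Ioo (0:ℝ) 1)) := by
    intro l
    exact (ENNReal.measurable_ofReal.comp_aemeasurable (hGint l).1.aemeasurable)
  -- the key ENNReal computation
  have key : ∑' l : ℕ, ENNReal.ofReal (A l)
      = ENNReal.ofReal (Gamma a₂ * Gamma s / Gamma (a₂ + s)) := by
    have hHint : IntegrableOn (fun t : ℝ => t ^ (a₂ - 1) * (1 - t) ^ (s - 1))
        (Set.Ioo 0 1) volume :=
      ((realBeta_intervalIntegrable ha₂ hspos).1).mono_set Set.Ioo_subset_Ioc_self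
    calc ∑' l : ℕ, ENNReal.ofReal (A l)
        = ∑' l : ℕ, ∫⁻ t in Set.Ioo (0:ℝ) 1, ENNReal.ofReal (G l t) := by
          congr 1
          funext l
          rw [hAdef]
          exact MeasureTheory.ofReal_integral_eq_lintegral_ofReal (hGint l)
            (ae_restrict_of_forall_mem measurableSet_Ioo (hGnonneg l))
      _ = ∫⁻ t in Set.Ioo (0:ℝ) 1, ∑' l : ℕ, ENNReal.ofReal (G l t) :=
          (MeasureTheory.lintegral_tsum hGaemeas).symm
      _ = ∫⁻ t in Set.Ioo (0:ℝ) 1, ENNReal.ofReal (t ^ (a₂ - 1) * (1 - t) ^ (s - 1)) := by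
          apply MeasureTheory.setLIntegral_congr_fun measurableSet_Ioo
          intro t ht
          simp only
          rw [← ENNReal.ofReal_tsum_of_nonneg (hGnonneg · t ht) (hsumIoo t ht).summable,
            (hsumIoo t ht).tsum_eq]
      _ = ENNReal.ofReal (∫ t in Set.Ioo (0:ℝ) 1, t ^ (a₂ - 1) * (1 - t) ^ (s - 1)) := by
          refine (MeasureTheory.ofReal_integral_eq_lintegral_ofReal hHint ?_).symm
          apply ae_restrict_of_forall_mem measurableSet_Ioo
          intro t ht
          have h1 : (0:ℝ) ≤ t := ht.1.le
          have h2 : (0:ℝ) ≤ 1 - t := by linarith [ht.2]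
          positivity
      _ = ENNReal.ofReal (Gamma a₂ * Gamma s / Gamma (a₂ + s)) := by
          rw [← MeasureTheory.integral_Ioc_eq_integral_Ioo,
            ← intervalIntegral.integral_of_le zero_le_one, realBeta_value ha₂ hspos]
  -- back to real numbers
  have hAnn : ∀ l : ℕ, 0 ≤ A l :=
    fun l => MeasureTheory.setIntegral_nonneg measurableSet_Ioo (hGnonneg l)
  have hBnn : (0:ℝ) ≤ Gamma a₂ * Gamma s / Gamma (a₂ + s) := by
    have h1 := (Gamma_pos_of_pos ha₂).le
    have h2 := (Gamma_pos_of_pos hspos).le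
    have h3 := (Gamma_pos_of_pos (by positivity : (0:ℝ) < a₂ + s)).le
    positivity
  have hfin : ∑' l : ℕ, ENNReal.ofReal (A l) ≠ ⊤ := by
    rw [key]; exact ENNReal.ofReal_ne_top
  have hsummA : Summable A := by
    have h := ENNReal.summable_toReal hfin
    refine h.congr fun l => ?_
    rw [ENNReal.toReal_ofReal (hAnn l)]
  have htsumA : ∑' l : ℕ, A l = Gamma a₂ * Gamma s / Gamma (a₂ + s) := by
    have h := congrArg ENNReal.toReal key
    rw [ENNReal.tsum_toReal_eq (fun l => ENNReal.ofReal_ne_top),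
      ENNReal.toReal_ofReal hBnn] at h
    rw [← h]
    exact tsum_congr fun l => (ENNReal.toReal_ofReal (hAnn l)).symm
  have hhs : HasSum A (Gamma a₂ * Gamma s / Gamma (a₂ + s)) := htsumA ▸ hsummA.hasSum
  have hfinal := hhs.mul_left (Gamma a₁ / Gamma s')
  have heqf : (fun l : ℕ => Gamma (a₁ + l) * Gamma (a₂ + l) / (Gamma (b₁ + l) * Gamma (1 + l)))
      = fun l : ℕ => (Gamma a₁ / Gamma s') * A l := funext hterm
  have hKB : Gamma a₁ / Gamma s' * (Gamma a₂ * Gamma s / Gamma (a₂ + s))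
      = Gamma a₁ * Gamma a₂ * Gamma s / (Gamma (a₁ + s) * Gamma (a₂ + s)) := by
    have hGa2s : Gamma (a₂ + s) ≠ 0 := (Gamma_pos_of_pos (by positivity)).ne'
    rw [← hs'def]
    field_simp
  rw [heqf, ← hKB]
  exact hfinal

theorem gauss_summation_partial_sums (a₁ a₂ b₁ s : ℝ)
    (ha₁ : 0 < a₁) (ha₂ : 0 < a₂) (hb₁ : 0 < b₁)
    (hs : s = b₁ - a₁ - a₂) (hspos : 0 < s) :
    Tendsto (fun m : ℕ => ∑ l ∈ Finset.range m,
        Gamma (a₁ + l) * Gamma (a₂ + l) / (Gamma (b₁ + l) * Gamma (1 + l)))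
      atTop
      (nhds (Gamma a₁ * Gamma a₂ * Gamma s / (Gamma (a₁ + s) * Gamma (a₂ + s)))) :=
  (gauss_hasSum a₁ a₂ b₁ s ha₁ ha₂ hb₁ hs hspos).tendsto_sum_nat
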